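/- Let S ⊆ {0,1}^X be shattering-extremal, x ∈ X, and S₀, S₁ the restrictions of S associated with x. Then S₀ and S₁ are shattering-extremal and str(S₀) ⊕_x str(S₁) = str(S). Conversely, if S₀ and S₁ are SE and str(S₀) ⊕_x str(S₁) = str(S), then S is SE. -/

import Mathlib

open Finset

variable {α : Type*} [Fintype α] [DecidableEq α]

/-- `S` shatters `Y`: every assignment on `Y` extends to a member of `S`. -/
def shatters (S : Finset (α → Bool)) (Y : Finset α) : Prop :=
  ∀ f : α → Bool, ∃ s ∈ S, ∀ a ∈ Y, s a = f a

/-- `S` strongly shatters `Y`: some assignment off `Y` has all its `Y`-extensions in `S`. -/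
def stronglyShatters (S : Finset (α → Bool)) (Y : Finset α) : Prop :=
  ∃ g : α → Bool, ∀ f : α → Bool, (fun a => if a ∈ Y then f a else g a) ∈ S

open Classical in
/-- The family of shattered subsets. -/
noncomputable def strF (S : Finset (α → Bool)) : Finset (Finset α) :=
  Finset.univ.filter (fun Y => shatters S Y)

open Classical in
/-- The family of strongly shattered subsets. -/
noncomputable def sstrF (S : Finset (α → Bool)) : Finset (Finset α) :=
  Finset.univ.filter (fun Y => stronglyShatters S Y)

/-- Shattering-extremal: shattered = strongly shattered. -/
def SE (S : Finset (α → Bool)) : Prop :=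
  ∀ Y : Finset α, shatters S Y ↔ stronglyShatters S Y

def oplus (A B : Finset (Finset α)) (x : α) : Finset (Finset α) :=
  A ∪ B ∪ (A ∩ B).image (insert x)

/- ### Arithmetic helpers (omega cannot handle contexts with certain Bool lambdas) -/

lemma arith1 {a b c n : ℕ} (hcs : a + b = c) (hc : c ≤ n + 1) (hb : 0 < b) : a ≤ n := by
  omega

lemma arith2 {a b c n : ℕ} (hcs : a + b = c) (hc : c ≤ n + 1) (ha : 0 < a) : b ≤ n := by
  omega

lemma arith3 {a b c ta tb t : ℕ} (hcs : a + b = c) (t0 : a ≤ ta) (t1 : b ≤ tb)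
    (hle : ta + tb ≤ t) : c ≤ t := by omega

lemma arith4 {a b c ua ub u : ℕ} (hcs : a + b = c) (u0 : ua ≤ a) (u1 : ub ≤ b)
    (hle : u ≤ ua + ub) : u ≤ c := by omega

lemma arith_key {a b c ta tb t : ℕ} (hcs : a + b = c) (t0 : a ≤ ta) (t1 : b ≤ tb)
    (hle : ta + tb ≤ t) (hct : c = t) : a = ta ∧ b = tb ∧ t ≤ ta + tb := by omega

/- ### Auxiliary lemmas -/

lemma mem_strF {S : Finset (α → Bool)} {Y : Finset α} : Y ∈ strF S ↔ shatters S Y := by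
  simp [strF]

lemma mem_sstrF {S : Finset (α → Bool)} {Y : Finset α} :
    Y ∈ sstrF S ↔ stronglyShatters S Y := by
  simp [sstrF]

lemma shatters_mono {S T : Finset (α → Bool)} (h : S ⊆ T) {Y : Finset α}
    (hs : shatters S Y) : shatters T Y := by
  intro f
  obtain ⟨s, hs1, hs2⟩ := hs f
  exact ⟨s, h hs1, hs2⟩

lemma strong_mono {S T : Finset (α → Bool)} (h : S ⊆ T) {Y : Finset α}
    (hs : stronglyShatters S Y) : stronglyShatters T Y := by
  obtain ⟨g, hg⟩ := hs
  exact ⟨g, fun f => h (hg f)⟩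

lemma strong_imp_shatters {S : Finset (α → Bool)} {Y : Finset α}
    (h : stronglyShatters S Y) : shatters S Y := by
  obtain ⟨g, hg⟩ := h
  intro f
  exact ⟨_, hg f, fun a ha => by simp [ha]⟩

lemma not_mem_of_shatters {S : Finset (α → Bool)} {x : α} {b : Bool} {Y : Finset α}
    (h : shatters (S.filter fun f => f x = b) Y) (hx : x ∈ Y) : False := by
  obtain ⟨s, hs, hagree⟩ := h (fun _ => !b)
  have h1 := hagree x hx
  have h2 := (mem_filter.1 hs).2
  rw [h2] at h1
  simp at h1

lemma not_mem_of_strong {S : Finset (α → Bool)} {x : α} {b : Bool} {Y : Finset α}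
    (h : stronglyShatters (S.filter fun f => f x = b) Y) (hx : x ∈ Y) : False :=
  not_mem_of_shatters (strong_imp_shatters h) hx

lemma eq_at_of_nosplit {S : Finset (α → Bool)} {x : α}
    (h : ¬((S.filter fun f => f x = false).Nonempty ∧ (S.filter fun f => f x = true).Nonempty))
    {f g : α → Bool} (hf : f ∈ S) (hg : g ∈ S) : f x = g x := by
  by_contra hne
  apply h
  cases hfx : f x <;> cases hgx : g x
  · exact absurd (by rw [hfx, hgx]) hne
  · exact ⟨⟨f, mem_filter.2 ⟨hf, hfx⟩⟩, ⟨g, mem_filter.2 ⟨hg, hgx⟩⟩⟩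
  · exact ⟨⟨g, mem_filter.2 ⟨hg, hgx⟩⟩, ⟨f, mem_filter.2 ⟨hf, hfx⟩⟩⟩
  · exact absurd (by rw [hfx, hgx]) hne

lemma card_split (S : Finset (α → Bool)) (x : α) :
    (S.filter fun f => f x = false).card + (S.filter fun f => f x = true).card = S.card := by
  have h2 : S.filter (fun f => ¬ f x = false) = S.filter (fun f => f x = true) := by
    apply filter_congr
    intro f _
    simp
  rw [← h2]
  exact Finset.card_filter_add_card_filter_not (p := fun f : α → Bool => f x = false)

lemma card_oplus {A B : Finset (Finset α)} {x : α} (h : ∀ Y ∈ A ∪ B, x ∉ Y) :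
    (oplus A B x).card = A.card + B.card := by
  have hinj : Set.InjOn (insert x) ((A ∩ B : Finset (Finset α)) : Set (Finset α)) := by
    intro Y hY Z hZ hE
    have hxY : x ∉ Y := h _ (mem_union_left _ (mem_inter.1 hY).1)
    have hxZ : x ∉ Z := h _ (mem_union_left _ (mem_inter.1 hZ).1)
    rw [← erase_insert hxY, ← erase_insert hxZ, hE]
  have hdisj : Disjoint (A ∪ B) ((A ∩ B).image (insert x)) := by
    rw [disjoint_left]
    intro Y hY hY'
    obtain ⟨Z, _, rfl⟩ := mem_image.1 hY'
    exact h _ hY (mem_insert_self x Z)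
  rw [oplus, card_union_of_disjoint hdisj, card_image_of_injOn hinj]
  have := card_union_add_card_inter A B
  omega

lemma oplus_str_subset (S : Finset (α → Bool)) (x : α) :
    oplus (strF (S.filter fun f => f x = false)) (strF (S.filter fun f => f x = true)) x
      ⊆ strF S := by
  intro Y hY
  rw [mem_strF]
  simp only [oplus, mem_union, mem_image, mem_inter, mem_strF] at hY
  rcases hY with (h | h) | ⟨Z, ⟨h0, h1⟩, rfl⟩
  · exact shatters_mono (filter_subset _ _) h
  · exact shatters_mono (filter_subset _ _) h
  · intro f
    cases hf : f x
    · obtain ⟨s, hs, ha⟩ := h0 f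
      refine ⟨s, (mem_filter.1 hs).1, fun a haY => ?_⟩
      rcases mem_insert.1 haY with rfl | haZ
      · rw [(mem_filter.1 hs).2, hf]
      · exact ha a haZ
    · obtain ⟨s, hs, ha⟩ := h1 f
      refine ⟨s, (mem_filter.1 hs).1, fun a haY => ?_⟩
      rcases mem_insert.1 haY with rfl | haZ
      · rw [(mem_filter.1 hs).2, hf]
      · exact ha a haZ

lemma x_not_mem_str {S : Finset (α → Bool)} {x : α} :
    ∀ Y ∈ strF (S.filter fun f => f x = false) ∪ strF (S.filter fun f => f x = true),
      x ∉ Y := by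
  intro Y hY hx
  rcases mem_union.1 hY with h | h
  · exact not_mem_of_shatters (mem_strF.1 h) hx
  · exact not_mem_of_shatters (mem_strF.1 h) hx

lemma x_not_mem_sstr {S : Finset (α → Bool)} {x : α} :
    ∀ Y ∈ sstrF (S.filter fun f => f x = false) ∪ sstrF (S.filter fun f => f x = true),
      x ∉ Y := by
  intro Y hY hx
  rcases mem_union.1 hY with h | h
  · exact not_mem_of_strong (mem_sstrF.1 h) hx
  · exact not_mem_of_strong (mem_sstrF.1 h) hx

/- Splitting of strong shattering -/

lemma strong_notmem {S : Finset (α → Bool)} {x : α} {Y : Finset α} (hx : x ∉ Y)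
    (h : stronglyShatters S Y) :
    ∃ b : Bool, stronglyShatters (S.filter fun f => f x = b) Y := by
  obtain ⟨g, hg⟩ := h
  refine ⟨g x, g, fun f => mem_filter.2 ⟨hg f, ?_⟩⟩
  simp [hx]

lemma strong_mem {S : Finset (α → Bool)} {x : α} {Y : Finset α} (hx : x ∈ Y) (b : Bool)
    (h : stronglyShatters S Y) :
    stronglyShatters (S.filter fun f => f x = b) (Y.erase x) := by
  obtain ⟨g, hg⟩ := h
  refine ⟨Function.update g x b, fun f => ?_⟩
  have h2 := hg (Function.update f x b)
  refine mem_filter.2 ⟨?_, ?_⟩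
  · convert h2 using 1
    funext a
    by_cases hax : a = x
    · subst hax
      simp [hx, Function.update_self, notMem_erase]
    · by_cases haY : a ∈ Y
      · simp [mem_erase, hax, haY, Function.update_of_ne hax]
      · simp [haY, mem_erase, hax, Function.update_of_ne hax]
  · simp [notMem_erase, Function.update_self]

lemma sstr_subset_oplus (S : Finset (α → Bool)) (x : α) :
    sstrF S ⊆ oplus (sstrF (S.filter fun f => f x = false))
      (sstrF (S.filter fun f => f x = true)) x := by
  intro Y hY
  rw [mem_sstrF] at hY
  simp only [oplus, mem_union, mem_image, mem_inter, mem_sstrF]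
  by_cases hx : x ∈ Y
  · right
    exact ⟨Y.erase x, ⟨strong_mem hx false hY, strong_mem hx true hY⟩, insert_erase hx⟩
  · left
    obtain ⟨b, hb⟩ := strong_notmem hx hY
    cases b
    · exact Or.inl hb
    · exact Or.inr hb

/- ### Pajor's inequality -/

lemma pajor_aux : ∀ n : ℕ, ∀ S : Finset (α → Bool), S.card ≤ n →
    S.card ≤ (strF S).card := by
  intro n
  induction n with
  | zero => intro S hS; exact hS.trans (Nat.zero_le _)
  | succ n ih =>
    intro S hS
    by_cases hsplit : ∃ x, (S.filter fun f => f x = false).Nonempty ∧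
        (S.filter fun f => f x = true).Nonempty
    · obtain ⟨x, h0, h1⟩ := hsplit
      have hcs := card_split S x
      have hp0 := card_pos.2 h0
      have hp1 := card_pos.2 h1
      have t0 := ih (S.filter fun f => f x = false) (arith1 hcs hS hp1)
      have t1 := ih (S.filter fun f => f x = true) (arith2 hcs hS hp0)
      have hle := card_le_card (oplus_str_subset S x)
      have hop := card_oplus (x_not_mem_str (S := S) (x := x))
      rw [hop] at hle
      exact arith3 hcs t0 t1 hle
    · rcases S.eq_empty_or_nonempty with rfl | ⟨g, hg⟩
      · simp
      · have hc1 : S.card ≤ 1 := card_le_one.2 (fun a ha b hb =>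
          funext fun y => eq_at_of_nosplit (fun hx => hsplit ⟨y, hx⟩) ha hb)
        have hmem : (∅ : Finset α) ∈ strF S :=
          mem_strF.2 (fun f => ⟨g, hg, by simp⟩)
        exact hc1.trans (card_pos.2 ⟨∅, hmem⟩)

lemma pajor (S : Finset (α → Bool)) : S.card ≤ (strF S).card :=
  pajor_aux S.card S le_rfl

/- ### Reverse Sauer inequality -/

lemma sstrF_empty : sstrF (∅ : Finset (α → Bool)) = ∅ := by
  rw [eq_empty_iff_forall_notMem]
  intro Y hY
  obtain ⟨g, hg⟩ := mem_sstrF.1 hY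
  exact absurd (hg fun _ => false) (notMem_empty _)

lemma revSauer_aux : ∀ n : ℕ, ∀ S : Finset (α → Bool), S.card ≤ n →
    (sstrF S).card ≤ S.card := by
  intro n
  induction n with
  | zero =>
    intro S hS
    have hempty : S = ∅ := card_eq_zero.1 (Nat.le_zero.1 hS)
    subst hempty
    simp [sstrF_empty]
  | succ n ih =>
    intro S hS
    by_cases hsplit : ∃ x, (S.filter fun f => f x = false).Nonempty ∧
        (S.filter fun f => f x = true).Nonempty
    · obtain ⟨x, h0, h1⟩ := hsplit
      have hcs := card_split S x
      have hp0 := card_pos.2 h0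
      have hp1 := card_pos.2 h1
      have u0 := ih (S.filter fun f => f x = false) (arith1 hcs hS hp1)
      have u1 := ih (S.filter fun f => f x = true) (arith2 hcs hS hp0)
      have hle := card_le_card (sstr_subset_oplus S x)
      have hop := card_oplus (x_not_mem_sstr (S := S) (x := x))
      rw [hop] at hle
      exact arith4 hcs u0 u1 hle
    · rcases S.eq_empty_or_nonempty with rfl | hne
      · simp [sstrF_empty]
      · have hsp : 1 ≤ S.card := card_pos.2 hne
        have honly : ∀ Y ∈ sstrF S, Y = (∅ : Finset α) := by
          intro Y hY
          obtain ⟨g, hg⟩ := mem_sstrF.1 hY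
          by_contra hYne
          obtain ⟨a, ha⟩ := nonempty_iff_ne_empty.2 hYne
          have heqf : (fun z : α => if z ∈ Y then false else g z)
              = (fun z : α => if z ∈ Y then true else g z) :=
            funext fun y => eq_at_of_nosplit (fun hx => hsplit ⟨y, hx⟩)
              (hg fun _ => false) (hg fun _ => true)
          have := congrFun heqf a
          simp [ha] at this
        have hu1 : (sstrF S).card ≤ 1 := card_le_one.2 (fun a ha b hb => by
          rw [honly a ha, honly b hb])
        exact hu1.trans hsp

lemma revSauer (S : Finset (α → Bool)) : (sstrF S).card ≤ S.card :=
  revSauer_aux S.card S le_rfl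

/- ### Key lemma: card equality implies str ⊆ sstr -/

lemma key_aux : ∀ n : ℕ, ∀ S : Finset (α → Bool), S.card ≤ n →
    S.card = (strF S).card →
    ∀ Y : Finset α, shatters S Y → stronglyShatters S Y := by
  intro n
  induction n with
  | zero =>
    intro S hS _ Y hY
    obtain ⟨s, hs, _⟩ := hY (fun _ => false)
    exact absurd ((card_pos.2 ⟨s, hs⟩).trans_le hS) (lt_irrefl 0)
  | succ n ih =>
    intro S hS hcard Y hY
    by_cases hsplit : ∃ x, x ∉ Y ∧ (S.filter fun f => f x = false).Nonempty ∧
        (S.filter fun f => f x = true).Nonempty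
    · obtain ⟨x, hxY, h0, h1⟩ := hsplit
      have hcs := card_split S x
      have hp0 := card_pos.2 h0
      have hp1 := card_pos.2 h1
      have t0 := pajor (S.filter fun f => f x = false)
      have t1 := pajor (S.filter fun f => f x = true)
      have hsub := oplus_str_subset S x
      have hle := card_le_card hsub
      have hop := card_oplus (x_not_mem_str (S := S) (x := x))
      rw [hop] at hle
      obtain ⟨e0, e1, e2⟩ := arith_key hcs t0 t1 hle hcard
      have heq : oplus (strF (S.filter fun f => f x = false))
          (strF (S.filter fun f => f x = true)) x = strF S :=
        eq_of_subset_of_card_le hsub (by rw [hop]; exact e2)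
      have hY' : Y ∈ strF S := mem_strF.2 hY
      rw [← heq] at hY'
      simp only [oplus, mem_union, mem_image] at hY'
      rcases hY' with (h | h) | ⟨Z, _, rfl⟩
      · exact strong_mono (filter_subset _ _)
          (ih _ (arith1 hcs hS hp1) e0 Y (mem_strF.1 h))
      · exact strong_mono (filter_subset _ _)
          (ih _ (arith2 hcs hS hp0) e1 Y (mem_strF.1 h))
      · exact absurd (mem_insert_self x Z) hxY
    · obtain ⟨s0, hs0S, _⟩ := hY (fun _ => false)
      refine ⟨s0, fun f => ?_⟩
      obtain ⟨sf, hsf, hagree⟩ := hY f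
      have hfun : (fun a => if a ∈ Y then f a else s0 a) = sf := by
        funext a
        by_cases haY : a ∈ Y
        · rw [if_pos haY]
          exact (hagree a haY).symm
        · rw [if_neg haY]
          exact eq_at_of_nosplit (fun hab => hsplit ⟨a, haY, hab⟩) hs0S hsf
      rw [hfun]
      exact hsf

lemma SE_of_card {S : Finset (α → Bool)} (h : S.card = (strF S).card) : SE S :=
  fun Y => ⟨key_aux S.card S le_rfl h Y, strong_imp_shatters⟩

lemma card_of_SE {S : Finset (α → Bool)} (h : SE S) : S.card = (strF S).card := by
  have hstr : strF S = sstrF S := by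
    ext Y
    rw [mem_strF, mem_sstrF]
    exact h Y
  have h1 := pajor S
  have h2 := revSauer S
  rw [← hstr] at h2
  exact le_antisymm h1 h2

/- ### Main theorem -/

theorem stmt10 (S : Finset (α → Bool)) (x : α) :
    SE S ↔
      (SE (S.filter fun f => f x = false) ∧ SE (S.filter fun f => f x = true) ∧
        oplus (strF (S.filter fun f => f x = false)) (strF (S.filter fun f => f x = true)) x
          = strF S) := by
  have hcs := card_split S x
  have t0 := pajor (S.filter fun f => f x = false)
  have t1 := pajor (S.filter fun f => f x = true)
  have hsub := oplus_str_subset S x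
  have hle := card_le_card hsub
  have hop := card_oplus (x_not_mem_str (S := S) (x := x))
  rw [hop] at hle
  constructor
  · intro h
    have hst := card_of_SE h
    obtain ⟨e0, e1, e2⟩ := arith_key hcs t0 t1 hle hst
    exact ⟨SE_of_card e0, SE_of_card e1,
      eq_of_subset_of_card_le hsub (by rw [hop]; exact e2)⟩
  · rintro ⟨h0, h1, heq⟩
    have c0 := card_of_SE h0
    have c1 := card_of_SE h1
    refine SE_of_card ?_
    rw [← heq, hop, ← c0, ← c1]
    exact hcs.symm
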